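/- arXiv:1601.00514 — 2 statements merged into one kernel-verified Lean document; each statement's English description precedes it below -/
import Mathlib

section
/- P-almost surely, liminf_{n→∞} M_n/S_n = 0; that is, the ratio of the maximum to the sum of the first n traps has almost-sure liminf equal to 0. -/
open MeasureTheory ProbabilityTheory Filter

/-- The maximum of the traps `σ_1, …, σ_n` (as the supremum of a finite set). -/
noncomputable def trapMax {Ω : Type*} (σ : ℤ → Ω → ℝ) (n : ℕ) (ω : Ω) : ℝ :=
  sSup ((fun i : ℤ => σ i ω) '' Set.Icc 1 (n : ℤ))

/-- The sum of the traps `σ_1, …, σ_n`. -/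
noncomputable def trapSum {Ω : Type*} (σ : ℤ → Ω → ℝ) (n : ℕ) (ω : Ω) : ℝ :=
  ∑ i ∈ Finset.Icc (1 : ℤ) (n : ℤ), σ i ω


noncomputable def bcT (α : ℝ) (k n : ℕ) : ℝ := n * ((n : ℝ) * (k+1)^2) ^ (α⁻¹)
noncomputable def bcC (α : ℝ) (k n : ℕ) : ℝ := max (bcT α k n) ((2:ℝ) ^ (α⁻¹))
noncomputable def bcG (α : ℝ) (k n : ℕ) : ℕ := ⌈(bcC α k n) ^ α / (2 ^ α - 1)⌉₊
noncomputable def qconst (α : ℝ) : ℝ := (1/2) * Real.exp (-(2*(1/((2:ℝ)^α-1)+1)))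

lemma bcT_nonneg (α : ℝ) (k n : ℕ) : 0 ≤ bcT α k n := by unfold bcT; positivity

lemma two_rpow_alpha_inv_ge_two {α : ℝ} (hα0 : 0 < α) (hα1 : α ≤ 1) :
    (2:ℝ) ≤ (2:ℝ) ^ (α⁻¹) := by
  calc (2:ℝ) = (2:ℝ) ^ (1:ℝ) := by norm_num
  _ ≤ (2:ℝ) ^ (α⁻¹) := by
      apply Real.rpow_le_rpow_of_exponent_le (by norm_num)
      rw [le_inv_comm₀ one_pos hα0]; simpa using hα1

lemma bcC_ge_two {α : ℝ} (hα0 : 0 < α) (hα1 : α ≤ 1) (k n : ℕ) : 2 ≤ bcC α k n :=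
  le_trans (two_rpow_alpha_inv_ge_two hα0 hα1) (le_max_right _ _)

lemma bcC_rpow_ge_two {α : ℝ} (hα0 : 0 < α) (hα1 : α ≤ 1) (k n : ℕ) :
    2 ≤ (bcC α k n) ^ α := by
  have h2 : ((2:ℝ) ^ (α⁻¹)) ^ α = 2 := by
    rw [← Real.rpow_mul (by norm_num), inv_mul_cancel₀ (ne_of_gt hα0), Real.rpow_one]
  calc (2:ℝ) = ((2:ℝ) ^ (α⁻¹)) ^ α := h2.symm
  _ ≤ (bcC α k n) ^ α := by
      apply Real.rpow_le_rpow (by positivity) (le_max_right _ _) (le_of_lt hα0)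

lemma two_rpow_sub_one_pos {α : ℝ} (hα0 : 0 < α) : 0 < (2:ℝ) ^ α - 1 := by
  have h : (1:ℝ) = (2:ℝ) ^ (0:ℝ) := by norm_num
  rw [h, sub_pos]
  exact Real.rpow_lt_rpow_of_exponent_lt one_lt_two hα0

lemma bcG_pos {α : ℝ} (hα0 : 0 < α) (hα1 : α ≤ 1) (k n : ℕ) : 0 < bcG α k n := by
  rw [bcG, ← Nat.succ_le_iff, Nat.one_le_ceil_iff]
  have h1 := bcC_rpow_ge_two hα0 hα1 k n
  have h2 := two_rpow_sub_one_pos hα0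
  positivity

lemma xy_facts {α : ℝ} (hα0 : 0 < α) (hα1 : α ≤ 1) (k n : ℕ) :
    0 ≤ (bcC α k n) ^ (-α) ∧ (bcC α k n) ^ (-α) ≤ 1/2 ∧
    (bcC α k n) ^ (-α) ≤ (bcC α k n / 2) ^ (-α) ∧ (bcC α k n / 2) ^ (-α) ≤ 1 ∧
    1 ≤ (bcG α k n : ℝ) * ((bcC α k n / 2) ^ (-α) - (bcC α k n) ^ (-α)) ∧
    (bcG α k n : ℝ) * ((bcC α k n) ^ (-α)) ≤ 1/((2:ℝ)^α-1) + 1 := by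
  have hc2 : 2 ≤ bcC α k n := bcC_ge_two hα0 hα1 k n
  have hc0 : (0:ℝ) < bcC α k n := by linarith
  have hca : 2 ≤ (bcC α k n) ^ α := bcC_rpow_ge_two hα0 hα1 k n
  have hcapos : (0:ℝ) < (bcC α k n) ^ α := by linarith
  have hβ : 0 < (2:ℝ)^α - 1 := two_rpow_sub_one_pos hα0
  have hxval : (bcC α k n) ^ (-α) = ((bcC α k n) ^ α)⁻¹ := Real.rpow_neg hc0.le α
  have hx0 : 0 ≤ (bcC α k n) ^ (-α) := by rw [hxval]; positivity
  have hx2 : (bcC α k n) ^ (-α) ≤ 1/2 := by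
    rw [hxval, inv_le_comm₀ hcapos (by norm_num)]
    simpa using hca
  have hyval : (bcC α k n / 2) ^ (-α) = (2:ℝ)^α * (bcC α k n) ^ (-α) := by
    rw [div_eq_mul_inv, Real.mul_rpow hc0.le (by norm_num),
      Real.inv_rpow (by norm_num : (0:ℝ) ≤ 2), Real.rpow_neg (by norm_num : (0:ℝ) ≤ 2),
      inv_inv, mul_comm]
  have h2a1 : (1:ℝ) ≤ (2:ℝ)^α := by
    rw [show (1:ℝ) = (2:ℝ)^(0:ℝ) by norm_num]
    exact Real.rpow_le_rpow_of_exponent_le (by norm_num) hα0.le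
  have hxy : (bcC α k n) ^ (-α) ≤ (bcC α k n / 2) ^ (-α) := by rw [hyval]; nlinarith
  have hy1 : (bcC α k n / 2) ^ (-α) ≤ 1 :=
    Real.rpow_le_one_of_one_le_of_nonpos (by linarith) (by linarith)
  have hGl : (bcC α k n) ^ α / ((2:ℝ)^α - 1) ≤ (bcG α k n : ℝ) := by
    rw [bcG]; exact Nat.le_ceil _
  have hGu : (bcG α k n : ℝ) ≤ (bcC α k n) ^ α / ((2:ℝ)^α - 1) + 1 := by
    rw [bcG]
    exact le_of_lt (Nat.ceil_lt_add_one (by positivity))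
  have hxinv : (bcC α k n) ^ α * (bcC α k n) ^ (-α) = 1 := by
    rw [hxval, mul_inv_cancel₀ (ne_of_gt hcapos)]
  refine ⟨hx0, hx2, hxy, hy1, ?_, ?_⟩
  · have hyx : (bcC α k n / 2) ^ (-α) - (bcC α k n) ^ (-α)
        = ((2:ℝ)^α - 1) * ((bcC α k n) ^ (-α)) := by rw [hyval]; ring
    rw [hyx]
    have h1 : (bcC α k n) ^ α / ((2:ℝ)^α - 1) * (((2:ℝ)^α - 1) * ((bcC α k n) ^ (-α))) = 1 := by
      field_simp
      nlinarith
    nlinarith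
  · have h2 : (bcC α k n) ^ α / ((2:ℝ)^α - 1) * ((bcC α k n) ^ (-α)) = 1/((2:ℝ)^α-1) := by
      rw [div_mul_eq_mul_div, hxinv]
    nlinarith


lemma real_key {x y : ℝ} {G : ℕ} (hx0 : 0 ≤ x) (hx2 : x ≤ 1/2) (hxy : x ≤ y) (hy1 : y ≤ 1)
    (hG : 1 ≤ (G:ℝ) * (y - x)) :
    (1/2) * Real.exp (-(2*((G:ℝ)*x))) ≤ (1-x)^G - (1-y)^G := by
  have h1x : 0 ≤ 1 - x := by linarith
  have h1y : 0 ≤ 1 - y := by linarith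
  have e2x := Real.add_one_le_exp (2*x)
  have hexp_pos : (0:ℝ) < Real.exp (2*x) := Real.exp_pos _
  have e1 : Real.exp (-(2*x)) ≤ 1 - x := by
    rw [Real.exp_neg]
    rw [inv_le_iff_one_le_mul₀ hexp_pos]
    nlinarith [Real.exp_pos (2*x)]
  have hA : Real.exp (-(2*x)) ^ G ≤ (1-x)^G :=
    pow_le_pow_left₀ (Real.exp_nonneg _) e1 G
  have hApow : Real.exp (-(2*x)) ^ G = Real.exp (-(2*((G:ℝ)*x))) := by
    rw [← Real.exp_nat_mul]; ring_nf
  set d := y - x with hd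
  have hd0 : 0 ≤ d := by linarith
  have e2 : 1 - y ≤ (1-x) * Real.exp (-d) := by
    have h3 : 1 - d ≤ Real.exp (-d) := by have := Real.add_one_le_exp (-d); linarith
    nlinarith
  have hB : (1-y)^G ≤ ((1-x) * Real.exp (-d))^G :=
    pow_le_pow_left₀ h1y e2 G
  have hB2 : ((1-x) * Real.exp (-d))^G = (1-x)^G * Real.exp (-((G:ℝ)*d)) := by
    rw [mul_pow, ← Real.exp_nat_mul]; ring_nf
  have hB3 : Real.exp (-((G:ℝ)*d)) ≤ Real.exp (-1) := by
    apply Real.exp_le_exp.2; linarith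
  have hB4 : Real.exp (-(1:ℝ)) ≤ 1/2 := by
    rw [Real.exp_neg]
    have h2e : (2:ℝ) ≤ Real.exp 1 := by have := Real.add_one_le_exp 1; linarith
    rw [inv_le_comm₀ (Real.exp_pos 1) (by norm_num)]
    linarith
  have hpow_nonneg : 0 ≤ (1-x)^G := pow_nonneg h1x G
  have : (1-y)^G ≤ (1-x)^G * (1/2) := by
    calc (1-y)^G ≤ (1-x)^G * Real.exp (-((G:ℝ)*d)) := by rw [← hB2]; exact hB
    _ ≤ (1-x)^G * (1/2) := by
        apply mul_le_mul_of_nonneg_left (le_trans hB3 hB4) hpow_nonneg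
  have : (1-x)^G * (1/2) ≤ (1-x)^G - (1-y)^G := by linarith
  calc (1/2) * Real.exp (-(2*((G:ℝ)*x))) = Real.exp (-(2*x))^G * (1/2) := by
        rw [hApow]; ring
  _ ≤ (1-x)^G * (1/2) := by
        apply mul_le_mul_of_nonneg_right hA; norm_num
  _ ≤ (1-x)^G - (1-y)^G := this


/-- events measurable w.r.t. pairwise disjoint groups of coordinates of an independent
family are independent. -/
lemma blocks_iIndepSet {Ω : Type*} [m0 : MeasurableSpace Ω] {P : Measure Ω}
    [IsProbabilityMeasure P]
    {σ : ℤ → Ω → ℝ} (hmeas : ∀ i, Measurable (σ i))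
    (hindep : iIndepFun σ P)
    (U : ℕ → Set ℤ) (hU : Pairwise (Function.onFun Disjoint U))
    (E : ℕ → Set Ω)
    (hE : ∀ k, MeasurableSet[⨆ i ∈ U k, MeasurableSpace.comap (σ i) inferInstance] (E k)) :
    iIndepSet E P := by
  have h_le : ∀ i, MeasurableSpace.comap (σ i) inferInstance ≤ m0 :=
    fun i => (hmeas i).comap_le
  have hm : ∀ (S : Set ℤ), (⨆ i ∈ S, MeasurableSpace.comap (σ i) inferInstance) ≤ m0 :=
    fun S => iSup₂_le fun i _ => h_le i
  have hEmeas : ∀ k, MeasurableSet (E k) := fun k => hm (U k) _ (hE k)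
  rw [iIndepSet_iff_meas_biInter hEmeas]
  intro s
  induction s using Finset.induction with
  | empty => simp
  | @insert a s ha ih =>
    have hdisj : Disjoint (U a) (⋃ k ∈ (s : Set ℕ), U k) := by
      refine Set.disjoint_iUnion₂_right.2 fun k hk => hU ?_
      rintro rfl; exact ha hk
    have hindep2 : Indep (⨆ i ∈ U a, MeasurableSpace.comap (σ i) inferInstance)
        (⨆ i ∈ (⋃ k ∈ (s : Set ℕ), U k), MeasurableSpace.comap (σ i) inferInstance) P :=
      indep_iSup_of_disjoint (fun i => h_le i) hindep.iIndep hdisj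
    have hmem : MeasurableSet[⨆ i ∈ (⋃ k ∈ (s : Set ℕ), U k),
        MeasurableSpace.comap (σ i) inferInstance] (⋂ k ∈ s, E k) := by
      refine MeasurableSet.biInter s.countable_toSet fun k hk => ?_
      have hle2 : (⨆ i ∈ U k, MeasurableSpace.comap (σ i) inferInstance) ≤
          ⨆ i ∈ (⋃ k ∈ (s : Set ℕ), U k), MeasurableSpace.comap (σ i) inferInstance := by
        refine iSup₂_le fun i hi => ?_
        exact le_iSup₂ (f := fun (i : ℤ) (_ : i ∈ ⋃ k ∈ (s : Set ℕ), U k) =>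
          MeasurableSpace.comap (σ i) inferInstance) i (Set.mem_biUnion hk hi)
      exact hle2 _ (hE k)
    have := ((Indep_iff _ _ _).1 hindep2) (E a) (⋂ k ∈ s, E k) (hE a) hmem
    rw [Finset.set_biInter_insert, Finset.prod_insert ha, this, ih]

section
variable {Ω : Type*} [m0 : MeasurableSpace Ω] {P : Measure Ω} [IsProbabilityMeasure P]
  {α : ℝ} {σ : ℤ → Ω → ℝ}

lemma tail_i (hmeas : ∀ i, Measurable (σ i))
    (hident : ∀ i, IdentDistrib (σ i) (σ 0) P P)
    (htail : ∀ u : ℝ, 1 ≤ u → P {ω | u ≤ σ 0 ω} = ENNReal.ofReal (u ^ (-α)))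
    (i : ℤ) (u : ℝ) (hu : 1 ≤ u) :
    P (σ i ⁻¹' Set.Ici u) = ENNReal.ofReal (u ^ (-α)) := by
  rw [(hident i).measure_mem_eq measurableSet_Ici]
  exact htail u hu

lemma tail_Iio (hmeas : ∀ i, Measurable (σ i))
    (hident : ∀ i, IdentDistrib (σ i) (σ 0) P P)
    (htail : ∀ u : ℝ, 1 ≤ u → P {ω | u ≤ σ 0 ω} = ENNReal.ofReal (u ^ (-α)))
    (i : ℤ) (u : ℝ) (hu : 1 ≤ u) :
    P (σ i ⁻¹' Set.Iio u) = 1 - ENNReal.ofReal (u ^ (-α)) := by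
  have h : σ i ⁻¹' Set.Iio u = (σ i ⁻¹' Set.Ici u)ᶜ := by
    rw [← Set.preimage_compl, Set.compl_Ici]
  rw [h, measure_compl ((hmeas i) measurableSet_Ici) (measure_ne_top _ _),
    tail_i hmeas hident htail i u hu, measure_univ]

lemma tail_Iic_ge (hmeas : ∀ i, Measurable (σ i))
    (hident : ∀ i, IdentDistrib (σ i) (σ 0) P P)
    (htail : ∀ u : ℝ, 1 ≤ u → P {ω | u ≤ σ 0 ω} = ENNReal.ofReal (u ^ (-α)))
    (i : ℤ) (u : ℝ) (hu : 1 ≤ u) :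
    1 - ENNReal.ofReal (u ^ (-α)) ≤ P (σ i ⁻¹' Set.Iic u) := by
  rw [← tail_Iio hmeas hident htail i u hu]
  exact measure_mono (Set.preimage_mono Set.Iio_subset_Iic_self)
end

section ProbAB
variable {Ω : Type*} [m0 : MeasurableSpace Ω] {P : Measure Ω} [IsProbabilityMeasure P]
  {α : ℝ} {σ : ℤ → Ω → ℝ}

lemma prob_AB (hα0 : 0 < α) (hα1 : α ≤ 1)
    (hmeas : ∀ i, Measurable (σ i))
    (hindep : iIndepFun σ P)
    (hident : ∀ i, IdentDistrib (σ i) (σ 0) P P)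
    (htail : ∀ u : ℝ, 1 ≤ u → P {ω | u ≤ σ 0 ω} = ENNReal.ofReal (u ^ (-α)))
    (k n : ℕ) (s : Finset ℤ) (hcard : s.card = bcG α k n) :
    ENNReal.ofReal (qconst α) ≤
      P ((⋂ i ∈ s, σ i ⁻¹' Set.Iic (bcC α k n)) \ (⋂ i ∈ s, σ i ⁻¹' Set.Iio (bcC α k n / 2))) := by
  obtain ⟨hx0, hx2, hxy, hy1, hG1, hG2⟩ := xy_facts hα0 hα1 k n
  have hc2 : 2 ≤ bcC α k n := bcC_ge_two hα0 hα1 k n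
  have ha1 : 1 ≤ bcC α k n / 2 := by linarith
  have hc1 : 1 ≤ bcC α k n := by linarith
  set c := bcC α k n with hcdef
  set G := bcG α k n with hGdef
  set x := c ^ (-α) with hxdef
  set y := (c / 2) ^ (-α) with hydef
  have h1x : (0:ℝ) ≤ 1 - x := by linarith
  have h1y : (0:ℝ) ≤ 1 - y := by linarith
  set A := ⋂ i ∈ s, σ i ⁻¹' Set.Iic c with hAdef
  set B := ⋂ i ∈ s, σ i ⁻¹' Set.Iio (c/2) with hBdef
  have hBA : B ⊆ A := by
    refine Set.iInter₂_mono fun i hi => Set.preimage_mono fun z hz => ?_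
    simp only [Set.mem_Iio] at hz
    simp only [Set.mem_Iic]
    linarith
  have hmeasB : MeasurableSet B :=
    MeasurableSet.biInter s.countable_toSet fun i _ => (hmeas i) measurableSet_Iio
  have hA_eq : P A = ∏ i ∈ s, P (σ i ⁻¹' Set.Iic c) :=
    hindep.meas_biInter fun i _ => ⟨Set.Iic c, measurableSet_Iic, rfl⟩
  have hB_eq : P B = ∏ i ∈ s, P (σ i ⁻¹' Set.Iio (c/2)) :=
    hindep.meas_biInter fun i _ => ⟨Set.Iio (c/2), measurableSet_Iio, rfl⟩
  have hdiff : P (A \ B) = P A - P B :=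
    measure_diff hBA hmeasB.nullMeasurableSet (measure_ne_top _ _)
  have hofx : ENNReal.ofReal (1 - x) = 1 - ENNReal.ofReal x := by
    rw [ENNReal.ofReal_sub _ hx0, ENNReal.ofReal_one]
  have hofy : ENNReal.ofReal (1 - y) = 1 - ENNReal.ofReal y := by
    rw [ENNReal.ofReal_sub _ (le_trans hx0 hxy), ENNReal.ofReal_one]
  have hPA : ENNReal.ofReal ((1-x)^G) ≤ P A := by
    calc ENNReal.ofReal ((1-x)^G) = (ENNReal.ofReal (1-x))^G := ENNReal.ofReal_pow h1x G
    _ = ∏ _i ∈ s, ENNReal.ofReal (1-x) := by rw [Finset.prod_const, hcard]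
    _ ≤ ∏ i ∈ s, P (σ i ⁻¹' Set.Iic c) := by
        refine Finset.prod_le_prod' fun i _ => ?_
        rw [hofx]
        exact tail_Iic_ge hmeas hident htail i c hc1
    _ = P A := hA_eq.symm
  have hPB : P B = ENNReal.ofReal ((1-y)^G) := by
    rw [hB_eq, Finset.prod_congr rfl
      (fun i _ => by rw [tail_Iio hmeas hident htail i (c/2) ha1, ← hofy] :
        ∀ i ∈ s, P (σ i ⁻¹' Set.Iio (c/2)) = ENNReal.ofReal (1-y)),
      Finset.prod_const, hcard, ← ENNReal.ofReal_pow h1y]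
  have hkey : qconst α ≤ (1-x)^G - (1-y)^G := by
    have h1 := real_key hx0 hx2 hxy hy1 hG1
    have h2 : Real.exp (-(2*(1/((2:ℝ)^α-1)+1))) ≤ Real.exp (-(2*((G:ℝ)*x))) := by
      apply Real.exp_le_exp.2; linarith
    unfold qconst
    linarith
  calc ENNReal.ofReal (qconst α) ≤ ENNReal.ofReal ((1-x)^G - (1-y)^G) :=
        ENNReal.ofReal_le_ofReal hkey
  _ = ENNReal.ofReal ((1-x)^G) - ENNReal.ofReal ((1-y)^G) :=
        ENNReal.ofReal_sub _ (pow_nonneg h1y G)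
  _ ≤ P A - P B := tsub_le_tsub hPA (le_of_eq hPB)
  _ = P (A \ B) := hdiff.symm
end ProbAB

noncomputable def bseq (α : ℝ) (t : ℕ) : ℕ → ℕ
  | 0 => 0
  | k+1 => bseq α t k + t * bcG α k (bseq α t k)

noncomputable def blkC (α : ℝ) (t k : ℕ) : ℝ := bcC α k (bseq α t k)
noncomputable def blkG (α : ℝ) (t k : ℕ) : ℕ := bcG α k (bseq α t k)
noncomputable def grpI (α : ℝ) (t k g : ℕ) : Finset ℤ :=
  Finset.Icc ((bseq α t k : ℤ) + g * blkG α t k + 1) ((bseq α t k : ℤ) + (g+1) * blkG α t k)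

lemma bseq_succ (α : ℝ) (t k : ℕ) : bseq α t (k+1) = bseq α t k + t * blkG α t k := rfl

lemma grpI_card (α : ℝ) (t k g : ℕ) : (grpI α t k g).card = blkG α t k := by
  rw [grpI, Int.card_Icc]
  have h : (bseq α t k : ℤ) + (g+1) * blkG α t k + 1 - ((bseq α t k : ℤ) + g * blkG α t k + 1)
      = (blkG α t k : ℤ) := by push_cast; ring
  rw [h, Int.toNat_natCast]

lemma grpI_subset_block (α : ℝ) (t k g : ℕ) (hg : g < t) :
    grpI α t k g ⊆ Finset.Icc ((bseq α t k : ℤ) + 1) (bseq α t (k+1) : ℤ) := by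
  apply Finset.Icc_subset_Icc
  · have : (0:ℤ) ≤ (g : ℤ) * blkG α t k := by positivity
    linarith
  · rw [bseq_succ]
    push_cast
    have h1 : ((g:ℤ)+1) * blkG α t k ≤ (t:ℤ) * blkG α t k := by
      apply mul_le_mul_of_nonneg_right _ (by positivity)
      exact_mod_cast hg
    linarith

lemma grpI_disjoint (α : ℝ) (t k : ℕ) : ∀ g g' : ℕ, g ≠ g' →
    Disjoint (grpI α t k g) (grpI α t k g') := by
  have key : ∀ g g' : ℕ, g < g' → Disjoint (grpI α t k g) (grpI α t k g') := by
    intro g g' hgg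
    rw [Finset.disjoint_left]
    intro i hi hi'
    simp only [grpI, Finset.mem_Icc] at hi hi'
    have h1 : ((g:ℤ)+1) * blkG α t k ≤ (g':ℤ) * blkG α t k := by
      apply mul_le_mul_of_nonneg_right _ (by positivity)
      exact_mod_cast hgg
    omega
  intro g g' hgg
  rcases lt_or_gt_of_ne hgg with h | h
  · exact key g g' h
  · exact (key g' g h).symm

lemma block_eq_biUnion (α : ℝ) (t k : ℕ) :
    Finset.Icc ((bseq α t k : ℤ) + 1) (bseq α t (k+1) : ℤ)
      = (Finset.range t).biUnion (fun g => grpI α t k g) := by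
  ext i
  simp only [Finset.mem_Icc, Finset.mem_biUnion, Finset.mem_range, grpI]
  constructor
  · rintro ⟨h1, h2⟩
    set G := blkG α t k with hG
    have hG0 : 0 < G := by
      rcases Nat.eq_zero_or_pos G with h | h
      · exfalso; rw [bseq_succ, ← hG, h] at h2; omega
      · exact h
    set p := bseq α t k with hp
    have hj0 : (0:ℤ) ≤ i - p - 1 := by omega
    set j := (i - (p:ℤ) - 1).toNat with hj
    have hjval : (j : ℤ) = i - p - 1 := Int.toNat_of_nonneg hj0
    have hjlt : j < t * G := by
      rw [bseq_succ, ← hG, ← hp] at h2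
      push_cast at h2
      omega
    refine ⟨j / G, ?_, ?_, ?_⟩
    · exact (Nat.div_lt_iff_lt_mul hG0).2 hjlt
    · have := Nat.div_mul_le_self j G
      have hcast : ((j / G : ℕ) : ℤ) * G ≤ (j:ℤ) := by exact_mod_cast this
      omega
    · have h5 := Nat.lt_mul_div_succ j hG0
      have hcast : (j:ℤ) < (G:ℤ) * (((j / G : ℕ) : ℤ) + 1) := by exact_mod_cast h5
      have hcast2 : (j:ℤ) < (((j / G : ℕ) : ℤ) + 1) * G := by linarith [hcast, mul_comm ((G:ℤ)) (((j / G : ℕ) : ℤ) + 1)]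
      omega
  · rintro ⟨g, hg, h1, h2⟩
    have hsub := grpI_subset_block α t k g hg
    have : i ∈ grpI α t k g := by simp only [grpI, Finset.mem_Icc]; exact ⟨h1, h2⟩
    have := hsub this
    simpa only [Finset.mem_Icc] using this

lemma bseq_mono (α : ℝ) (t : ℕ) : Monotone (bseq α t) := by
  apply monotone_nat_of_le_succ
  intro k
  rw [bseq_succ]
  omega

lemma bseq_lt_succ {α : ℝ} (hα0 : 0 < α) (hα1 : α ≤ 1) (t k : ℕ) (ht : 0 < t) :
    bseq α t k < bseq α t (k+1) := by
  rw [bseq_succ]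
  have := bcG_pos hα0 hα1 k (bseq α t k)
  have : 0 < t * blkG α t k := Nat.mul_pos ht this
  omega

lemma bseq_ge {α : ℝ} (hα0 : 0 < α) (hα1 : α ≤ 1) (t : ℕ) (ht : 0 < t) (k : ℕ) :
    k ≤ bseq α t k := by
  induction k with
  | zero => simp [bseq]
  | succ k ih => have := bseq_lt_succ hα0 hα1 t k ht; omega

open scoped ENNReal in
lemma qconst_pos (α : ℝ) : 0 < qconst α := by unfold qconst; positivity

open scoped ENNReal

section Events
variable {Ω : Type*} [m0 : MeasurableSpace Ω] {P : Measure Ω} [IsProbabilityMeasure P]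
  {α : ℝ} {σ : ℤ → Ω → ℝ}

/-- the group event: all traps in group `g` of block `k` are `≤ c_k`, and at least one
is `≥ c_k / 2`. -/
def evtAB (σ : ℤ → Ω → ℝ) (α : ℝ) (t k g : ℕ) : Set Ω :=
  (⋂ i ∈ grpI α t k g, σ i ⁻¹' Set.Iic (blkC α t k)) \
    (⋂ i ∈ grpI α t k g, σ i ⁻¹' Set.Iio (blkC α t k / 2))

/-- the block event. -/
def evtE (σ : ℤ → Ω → ℝ) (α : ℝ) (t k : ℕ) : Set Ω := ⋂ g ∈ Finset.range t, evtAB σ α t k g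

lemma measSet_sup {S : Set ℤ} {i : ℤ} (hi : i ∈ S) {B : Set ℝ} (hB : MeasurableSet B) :
    MeasurableSet[⨆ j ∈ S, MeasurableSpace.comap (σ j) inferInstance] (σ i ⁻¹' B) :=
  le_iSup₂ (f := fun (j : ℤ) (_ : j ∈ S) =>
    MeasurableSpace.comap (σ j) (inferInstance : MeasurableSpace ℝ)) i hi
    (σ i ⁻¹' B) ⟨B, hB, rfl⟩

lemma evtAB_meas_sup {S : Set ℤ} (t k g : ℕ) (hS : ∀ i ∈ grpI α t k g, i ∈ S) :
    MeasurableSet[⨆ j ∈ S, MeasurableSpace.comap (σ j) inferInstance] (evtAB σ α t k g) :=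
  MeasurableSet.diff
    (MeasurableSet.biInter (grpI α t k g).countable_toSet fun i hi =>
      measSet_sup (hS i hi) measurableSet_Iic)
    (MeasurableSet.biInter (grpI α t k g).countable_toSet fun i hi =>
      measSet_sup (hS i hi) measurableSet_Iio)

lemma evtE_meas_sup (t k : ℕ) :
    MeasurableSet[⨆ j ∈ (↑(Finset.Icc ((bseq α t k : ℤ) + 1) (bseq α t (k+1) : ℤ)) : Set ℤ),
      MeasurableSpace.comap (σ j) inferInstance] (evtE σ α t k) :=
  MeasurableSet.biInter (Finset.range t).countable_toSet fun g hg =>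
    evtAB_meas_sup t k g fun i hi => by
      exact_mod_cast grpI_subset_block α t k g (Finset.mem_range.1 hg) hi

lemma evtE_measurable (hmeas : ∀ i, Measurable (σ i)) (t k : ℕ) :
    MeasurableSet (evtE σ α t k) :=
  (iSup₂_le fun i _ => (hmeas i).comap_le) _ (evtE_meas_sup t k)

lemma evtE_prob (hα0 : 0 < α) (hα1 : α ≤ 1)
    (hmeas : ∀ i, Measurable (σ i))
    (hindep : iIndepFun σ P)
    (hident : ∀ i, IdentDistrib (σ i) (σ 0) P P)
    (htail : ∀ u : ℝ, 1 ≤ u → P {ω | u ≤ σ 0 ω} = ENNReal.ofReal (u ^ (-α)))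
    (t k : ℕ) :
    ENNReal.ofReal (qconst α ^ t) ≤ P (evtE σ α t k) := by
  have hiid : iIndepSet (fun g => evtAB σ α t k g) P :=
    blocks_iIndepSet hmeas hindep (fun g => (↑(grpI α t k g) : Set ℤ))
      (fun g g' h => Finset.disjoint_coe.2 (grpI_disjoint α t k g g' h))
      _ (fun g => evtAB_meas_sup t k g fun i hi => hi)
  have hprod : P (evtE σ α t k) = ∏ g ∈ Finset.range t, P (evtAB σ α t k g) := by
    rw [evtE]; exact hiid.meas_biInter (Finset.range t)
  have hfac : ∀ g ∈ Finset.range t, ENNReal.ofReal (qconst α) ≤ P (evtAB σ α t k g) := by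
    intro g _
    exact prob_AB hα0 hα1 hmeas hindep hident htail k (bseq α t k) (grpI α t k g)
      (grpI_card α t k g)
  calc ENNReal.ofReal (qconst α ^ t) = (ENNReal.ofReal (qconst α))^t :=
        ENNReal.ofReal_pow (le_of_lt (qconst_pos α)) t
  _ = ∏ _g ∈ Finset.range t, ENNReal.ofReal (qconst α) := by
        rw [Finset.prod_const, Finset.card_range]
  _ ≤ ∏ g ∈ Finset.range t, P (evtAB σ α t k g) := Finset.prod_le_prod' hfac
  _ = P (evtE σ α t k) := hprod.symm

lemma evtE_iIndep (hmeas : ∀ i, Measurable (σ i))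
    (hindep : iIndepFun σ P) (t : ℕ) :
    iIndepSet (fun k => evtE σ α t k) P := by
  apply blocks_iIndepSet hmeas hindep
    (fun k => (↑(Finset.Icc ((bseq α t k : ℤ) + 1) (bseq α t (k+1) : ℤ)) : Set ℤ))
    ?_ _ (fun k => evtE_meas_sup t k)
  have key : ∀ k l : ℕ, k < l →
      Disjoint (↑(Finset.Icc ((bseq α t k : ℤ) + 1) (bseq α t (k+1) : ℤ)) : Set ℤ)
        (↑(Finset.Icc ((bseq α t l : ℤ) + 1) (bseq α t (l+1) : ℤ)) : Set ℤ) := by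
    intro k l hkl
    rw [Set.disjoint_left]
    intro i hi hi'
    simp only [Finset.coe_Icc, Set.mem_Icc] at hi hi'
    have hmono : bseq α t (k+1) ≤ bseq α t l := bseq_mono α t hkl
    have h1 : ((bseq α t (k+1) : ℕ) : ℤ) ≤ ((bseq α t l : ℕ) : ℤ) := by exact_mod_cast hmono
    omega
  intro k l hkl
  rcases lt_or_gt_of_ne hkl with h | h
  · exact key k l h
  · exact (key l k h).symm

lemma evtE_limsup_one (hα0 : 0 < α) (hα1 : α ≤ 1)
    (hmeas : ∀ i, Measurable (σ i))
    (hindep : iIndepFun σ P)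
    (hident : ∀ i, IdentDistrib (σ i) (σ 0) P P)
    (htail : ∀ u : ℝ, 1 ≤ u → P {ω | u ≤ σ 0 ω} = ENNReal.ofReal (u ^ (-α)))
    (t : ℕ) :
    P (Filter.limsup (fun k => evtE σ α t k) Filter.atTop) = 1 := by
  apply measure_limsup_eq_one (fun k => evtE_measurable hmeas t k) (evtE_iIndep hmeas hindep t)
  rw [eq_top_iff]
  calc (⊤ : ℝ≥0∞) = ∑' (_ : ℕ), ENNReal.ofReal (qconst α ^ t) := by
        rw [ENNReal.tsum_const_eq_top_of_ne_zero]
        simp only [ne_eq, ENNReal.ofReal_eq_zero, not_le]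
        exact pow_pos (qconst_pos α) t
  _ ≤ ∑' k, P (evtE σ α t k) :=
        ENNReal.tsum_le_tsum fun k => evtE_prob hα0 hα1 hmeas hindep hident htail t k
end Events

section EvtF
variable {Ω : Type*} [m0 : MeasurableSpace Ω] {P : Measure Ω} [IsProbabilityMeasure P]
  {α : ℝ} {σ : ℤ → Ω → ℝ}

/-- the bad event: the sum up to the beginning of block `k` is larger than `T_k`. -/
def evtF (σ : ℤ → Ω → ℝ) (α : ℝ) (t k : ℕ) : Set Ω :=
  {ω | bcT α k (bseq α t k) < trapSum σ (bseq α t k) ω}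

lemma trapSum_measurable (hmeas : ∀ i, Measurable (σ i)) (n : ℕ) :
    Measurable (trapSum σ n) := by
  unfold trapSum
  exact Finset.measurable_sum _ (fun i _ => hmeas i)

lemma card_Icc_one (n : ℕ) : (Finset.Icc (1:ℤ) (n:ℤ)).card = n := by
  rw [Int.card_Icc]
  have h : (n:ℤ) + 1 - 1 = (n:ℤ) := by ring
  rw [h, Int.toNat_natCast]

lemma trapSum_zero (ω : Ω) : trapSum σ 0 ω = 0 := by
  unfold trapSum
  rw [show ((0:ℕ):ℤ) = 0 by norm_num, Finset.Icc_eq_empty (by norm_num), Finset.sum_empty]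

lemma evtF_prob (hα0 : 0 < α) (hα1 : α ≤ 1)
    (hmeas : ∀ i, Measurable (σ i))
    (hident : ∀ i, IdentDistrib (σ i) (σ 0) P P)
    (htail : ∀ u : ℝ, 1 ≤ u → P {ω | u ≤ σ 0 ω} = ENNReal.ofReal (u ^ (-α)))
    (t k : ℕ) :
    P (evtF σ α t k) ≤ ENNReal.ofReal (1/((k:ℝ)+1)^2) := by
  set n := bseq α t k with hn
  rcases Nat.eq_zero_or_pos n with h0 | hpos
  · have hempty : evtF σ α t k = ∅ := by
      ext ω
      simp only [evtF, Set.mem_setOf_eq, Set.mem_empty_iff_false, iff_false, not_lt, ← hn]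
      have h2 : bcT α k 0 = 0 := by unfold bcT; norm_num
      rw [h0, h2, trapSum_zero]
    rw [hempty]
    simp
  · have hn1 : (1:ℝ) ≤ (n:ℝ) := by exact_mod_cast hpos
    have hnne : (n:ℝ) ≠ 0 := by positivity
    have hk1 : (1:ℝ) ≤ ((k:ℝ)+1)^2 := by nlinarith [sq_nonneg (k:ℝ), (Nat.cast_nonneg k : (0:ℝ) ≤ (k:ℝ))]
    have hbase : (1:ℝ) ≤ (n:ℝ) * ((k:ℝ)+1)^2 := by nlinarith
    have hbase0 : (0:ℝ) < (n:ℝ) * ((k:ℝ)+1)^2 := by nlinarith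
    set z := ((n:ℝ) * ((k:ℝ)+1)^2) ^ (α⁻¹) with hz
    have hz1 : (1:ℝ) ≤ z := by
      rw [hz, show (1:ℝ) = (1:ℝ)^(α⁻¹) from (Real.one_rpow _).symm]
      exact Real.rpow_le_rpow (by norm_num) (by rw [Real.one_rpow]; exact hbase) (by positivity)
    have hTn : bcT α k n / n = z := by
      rw [bcT, hz, mul_div_cancel_left₀ _ hnne]
    have hbcT : bcT α k n = n * z := by rw [bcT, hz]
    have hsub : evtF σ α t k ⊆ ⋃ i ∈ Finset.Icc (1:ℤ) (n:ℤ), σ i ⁻¹' Set.Ici (bcT α k n / n) := by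
      intro ω hω
      by_contra hcon
      simp only [Set.mem_iUnion, not_exists, Set.mem_preimage, Set.mem_Ici, not_le] at hcon
      have hlt : ∀ i ∈ Finset.Icc (1:ℤ) (n:ℤ), σ i ω ≤ bcT α k n / n :=
        fun i hi => le_of_lt (hcon i hi)
      have hsum : trapSum σ n ω ≤ (Finset.Icc (1:ℤ) (n:ℤ)).card • (bcT α k n / n) := by
        unfold trapSum
        calc ∑ i ∈ Finset.Icc (1:ℤ) (n:ℤ), σ i ω
            ≤ ∑ _i ∈ Finset.Icc (1:ℤ) (n:ℤ), (bcT α k n / n) := Finset.sum_le_sum hlt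
        _ = (Finset.Icc (1:ℤ) (n:ℤ)).card • (bcT α k n / n) := Finset.sum_const _
      rw [card_Icc_one, nsmul_eq_mul, hTn] at hsum
      have hfin : trapSum σ n ω ≤ bcT α k n := by rw [hbcT]; exact hsum
      exact absurd hω (by simp only [evtF, Set.mem_setOf_eq, not_lt, ← hn]; exact hfin)
    calc P (evtF σ α t k) ≤ ∑ i ∈ Finset.Icc (1:ℤ) (n:ℤ), P (σ i ⁻¹' Set.Ici (bcT α k n / n)) :=
          le_trans (measure_mono hsub) (measure_biUnion_finset_le _ _)
    _ = ∑ _i ∈ Finset.Icc (1:ℤ) (n:ℤ), ENNReal.ofReal (z ^ (-α)) := by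
          refine Finset.sum_congr rfl fun i _ => ?_
          rw [hTn]
          exact tail_i hmeas hident htail i z hz1
    _ = ENNReal.ofReal (1/((k:ℝ)+1)^2) := by
          rw [Finset.sum_const, card_Icc_one, nsmul_eq_mul]
          have hzval : z ^ (-α) = ((n:ℝ) * ((k:ℝ)+1)^2)⁻¹ := by
            rw [hz, ← Real.rpow_mul (le_of_lt hbase0),
              show α⁻¹ * (-α) = -1 by field_simp, Real.rpow_neg_one]
          rw [hzval, ← ENNReal.ofReal_natCast n, ← ENNReal.ofReal_mul (by positivity)]
          congr 1
          field_simp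

lemma evtF_limsup_zero (hα0 : 0 < α) (hα1 : α ≤ 1)
    (hmeas : ∀ i, Measurable (σ i))
    (hident : ∀ i, IdentDistrib (σ i) (σ 0) P P)
    (htail : ∀ u : ℝ, 1 ≤ u → P {ω | u ≤ σ 0 ω} = ENNReal.ofReal (u ^ (-α)))
    (t : ℕ) :
    P (Filter.limsup (fun k => evtF σ α t k) Filter.atTop) = 0 := by
  apply measure_limsup_atTop_eq_zero
  have hsummable : Summable (fun k : ℕ => 1/((k:ℝ)+1)^2) := by
    have h2 : Summable (fun k : ℕ => 1/((k:ℝ))^2) := Real.summable_one_div_nat_pow.2 one_lt_two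
    have h3 := (summable_nat_add_iff 1).2 h2
    refine h3.congr fun k => ?_
    push_cast
    ring
  have hle : ∑' k, P (evtF σ α t k) ≤ ENNReal.ofReal (∑' k : ℕ, 1/((k:ℝ)+1)^2) := by
    rw [ENNReal.ofReal_tsum_of_nonneg (fun k => by positivity) hsummable]
    exact ENNReal.tsum_le_tsum fun k => evtF_prob hα0 hα1 hmeas hident htail t k
  exact ne_top_of_le_ne_top ENNReal.ofReal_ne_top hle
end EvtF

section Pointwise
variable {Ω : Type*} [m0 : MeasurableSpace Ω] {α : ℝ} {σ : ℤ → Ω → ℝ}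

lemma ratio_bounds (ω : Ω) (hσ1 : ∀ i : ℤ, 1 ≤ σ i ω) (n : ℕ) :
    0 ≤ trapMax σ n ω / trapSum σ n ω ∧ trapMax σ n ω / trapSum σ n ω ≤ 1 := by
  rcases Nat.eq_zero_or_pos n with h0 | hpos
  · subst h0
    have h1 : trapMax σ 0 ω = 0 := by
      unfold trapMax
      rw [show ((0:ℕ):ℤ) = 0 by norm_num, Set.Icc_eq_empty (by norm_num), Set.image_empty,
        Real.sSup_empty]
    rw [h1]
    norm_num
  · have hS0 : 0 ≤ trapSum σ n ω := by
      unfold trapSum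
      exact Finset.sum_nonneg fun i _ => le_trans zero_le_one (hσ1 i)
    have hMS : trapMax σ n ω ≤ trapSum σ n ω := by
      unfold trapMax
      refine Real.sSup_le ?_ hS0
      rintro x ⟨i, hi, rfl⟩
      rw [Set.mem_Icc] at hi
      unfold trapSum
      exact Finset.single_le_sum (f := fun j => σ j ω)
        (fun j _ => le_trans zero_le_one (hσ1 j)) (Finset.mem_Icc.2 hi)
    have hM0 : 0 ≤ trapMax σ n ω := by
      have hmem : σ 1 ω ∈ (fun i : ℤ => σ i ω) '' Set.Icc 1 (n : ℤ) := by
        refine ⟨1, ?_, rfl⟩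
        rw [Set.mem_Icc]
        constructor
        · norm_num
        · exact_mod_cast hpos
      have hbdd : BddAbove ((fun i : ℤ => σ i ω) '' Set.Icc 1 (n : ℤ)) :=
        ((Set.finite_Icc _ _).image _).bddAbove
      have := le_csSup hbdd hmem
      unfold trapMax
      linarith [hσ1 1]
    exact ⟨div_nonneg hM0 hS0, div_le_one_of_le₀ hMS hS0⟩

lemma pointwise_ratio (hα0 : 0 < α) (hα1 : α ≤ 1) (t : ℕ) (ht : 0 < t) (k : ℕ) (ω : Ω)
    (hσ1 : ∀ i : ℤ, 1 ≤ σ i ω)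
    (hE : ω ∈ evtE σ α t k)
    (hF : trapSum σ (bseq α t k) ω ≤ bcT α k (bseq α t k)) :
    trapMax σ (bseq α t (k+1)) ω / trapSum σ (bseq α t (k+1)) ω ≤ 2 / t := by
  set p := bseq α t k with hp
  set N := bseq α t (k+1) with hN
  set c := blkC α t k with hc
  have hc2 : 2 ≤ c := bcC_ge_two hα0 hα1 k p
  have hc0 : (0:ℝ) < c := by linarith
  have hTc : bcT α k p ≤ c := le_max_left _ _
  have hpN : p ≤ N := bseq_mono α t (Nat.le_succ k)
  have hN1 : 1 ≤ N := by
    have := bseq_ge hα0 hα1 t ht (k+1)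
    omega
  -- Step A : all traps up to N are at most c
  have hstepA : ∀ i : ℤ, 1 ≤ i → i ≤ (N:ℤ) → σ i ω ≤ c := by
    intro i hi1 hiN
    rcases le_or_gt i (p:ℤ) with hip | hip
    · have h1 : σ i ω ≤ trapSum σ p ω := by
        unfold trapSum
        exact Finset.single_le_sum (f := fun j => σ j ω)
          (fun j _ => le_trans zero_le_one (hσ1 j)) (Finset.mem_Icc.2 ⟨hi1, hip⟩)
      linarith
    · have hiblk : i ∈ Finset.Icc ((p:ℤ)+1) (N:ℤ) := Finset.mem_Icc.2 ⟨by omega, hiN⟩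
      rw [hp, hN, block_eq_biUnion α t k] at hiblk
      rw [Finset.mem_biUnion] at hiblk
      obtain ⟨g, hg, higrp⟩ := hiblk
      have hEg : ω ∈ evtAB σ α t k g := by
        have := Set.mem_iInter₂.1 hE g hg
        exact this
      have hA := hEg.1
      have := Set.mem_iInter₂.1 hA i higrp
      simpa [hc] using this
  -- Step B : trapMax at N is at most c
  have hstepB : trapMax σ N ω ≤ c := by
    unfold trapMax
    refine Real.sSup_le ?_ hc0.le
    rintro x ⟨i, hi, rfl⟩
    rw [Set.mem_Icc] at hi
    exact hstepA i hi.1 hi.2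
  -- Step C : trapSum at N is at least t * (c/2)
  have hstepC : (t:ℝ) * (c/2) ≤ trapSum σ N ω := by
    have hsub : Finset.Icc ((p:ℤ)+1) (N:ℤ) ⊆ Finset.Icc (1:ℤ) (N:ℤ) :=
      Finset.Icc_subset_Icc (by omega) le_rfl
    have h1 : ∑ i ∈ Finset.Icc ((p:ℤ)+1) (N:ℤ), σ i ω ≤ trapSum σ N ω := by
      unfold trapSum
      exact Finset.sum_le_sum_of_subset_of_nonneg hsub
        (fun i _ _ => le_trans zero_le_one (hσ1 i))
    have h2 : ∑ i ∈ Finset.Icc ((p:ℤ)+1) (N:ℤ), σ i ω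
        = ∑ g ∈ Finset.range t, ∑ i ∈ grpI α t k g, σ i ω := by
      rw [hp, hN, block_eq_biUnion α t k]
      exact Finset.sum_biUnion fun g _ g' _ hgg' =>
        Finset.disjoint_coe.1 (Finset.disjoint_coe.2 (grpI_disjoint α t k g g' hgg'))
    have h3 : ∀ g ∈ Finset.range t, c/2 ≤ ∑ i ∈ grpI α t k g, σ i ω := by
      intro g hg
      have hEg : ω ∈ evtAB σ α t k g := Set.mem_iInter₂.1 hE g hg
      have hB := hEg.2
      rw [Set.mem_iInter₂] at hB
      push_neg at hB
      obtain ⟨j, hj, hjB⟩ := hB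
      have hja : c/2 ≤ σ j ω := by
        simp only [Set.mem_preimage, Set.mem_Iio, not_lt, hc] at hjB
        exact hjB
      calc c/2 ≤ σ j ω := hja
      _ ≤ ∑ i ∈ grpI α t k g, σ i ω :=
          Finset.single_le_sum (f := fun i => σ i ω)
            (fun i _ => le_trans zero_le_one (hσ1 i)) hj
    calc (t:ℝ) * (c/2) = ∑ _g ∈ Finset.range t, c/2 := by
          rw [Finset.sum_const, Finset.card_range, nsmul_eq_mul]
    _ ≤ ∑ g ∈ Finset.range t, ∑ i ∈ grpI α t k g, σ i ω := Finset.sum_le_sum h3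
    _ = ∑ i ∈ Finset.Icc ((p:ℤ)+1) (N:ℤ), σ i ω := h2.symm
    _ ≤ trapSum σ N ω := h1
  -- Step D
  have ht0 : (0:ℝ) < t := by exact_mod_cast ht
  have hd : (0:ℝ) < (t:ℝ) * (c/2) := by positivity
  have := div_le_div₀ hc0.le hstepB hd hstepC
  calc trapMax σ N ω / trapSum σ N ω ≤ c / ((t:ℝ) * (c/2)) := this
  _ = 2 / t := by field_simp
end Pointwise

/-- **Statement 0.** For i.i.d. traps with `P(σ_0 ≥ u) = u^{-α}` (`u ≥ 1`, `α ∈ (0,1]`),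
`P`-almost surely `liminf_{n→∞} M_n / S_n = 0`. -/
theorem liminf_max_div_sum_eq_zero
    {Ω : Type*} [MeasurableSpace Ω] (P : Measure Ω) [IsProbabilityMeasure P]
    (α : ℝ) (hα : α ∈ Set.Ioc (0 : ℝ) 1)
    (σ : ℤ → Ω → ℝ) (hmeas : ∀ i, Measurable (σ i))
    (hindep : iIndepFun σ P)
    (hident : ∀ i, IdentDistrib (σ i) (σ 0) P P)
    (htail : ∀ u : ℝ, 1 ≤ u → P {ω | u ≤ σ 0 ω} = ENNReal.ofReal (u ^ (-α))) :
    ∀ᵐ ω ∂P,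
      Filter.liminf (fun n : ℕ => trapMax σ n ω / trapSum σ n ω) Filter.atTop = 0 := by
  obtain ⟨hα0, hα1⟩ := hα
  -- almost surely all traps are at least 1
  have hone : ∀ᵐ ω ∂P, ∀ i : ℤ, 1 ≤ σ i ω := by
    rw [ae_all_iff]
    intro i
    have h1 : P (σ i ⁻¹' Set.Ici 1) = 1 := by
      rw [tail_i hmeas hident htail i 1 le_rfl, Real.one_rpow, ENNReal.ofReal_one]
    have hcpl : {ω | ¬ (1:ℝ) ≤ σ i ω} = (σ i ⁻¹' Set.Ici 1)ᶜ := by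
      ext ω; simp [Set.mem_compl_iff]
    rw [ae_iff, hcpl, measure_compl ((hmeas i) measurableSet_Ici) (measure_ne_top _ _), h1]
    simp
  -- almost surely, for each `t`, infinitely many block events occur
  have hEs : ∀ᵐ ω ∂P, ∀ t : ℕ, ω ∈ Filter.limsup (fun k => evtE σ α (t+1) k) Filter.atTop := by
    rw [ae_all_iff]
    intro t
    have h1 := evtE_limsup_one hα0 hα1 hmeas hindep hident htail (t+1)
    have hms : MeasurableSet (Filter.limsup (fun k => evtE σ α (t+1) k) Filter.atTop) :=
      MeasurableSet.measurableSet_limsup fun k => evtE_measurable hmeas (t+1) k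
    rw [ae_iff]
    have : {ω | ω ∉ Filter.limsup (fun k => evtE σ α (t+1) k) Filter.atTop}
        = (Filter.limsup (fun k => evtE σ α (t+1) k) Filter.atTop)ᶜ := rfl
    rw [this, measure_compl hms (measure_ne_top _ _), h1]
    simp
  -- almost surely, for each `t`, only finitely many bad events occur
  have hFs : ∀ᵐ ω ∂P, ∀ t : ℕ, ω ∉ Filter.limsup (fun k => evtF σ α (t+1) k) Filter.atTop := by
    rw [ae_all_iff]
    intro t
    exact measure_eq_zero_iff_ae_notMem.1 (evtF_limsup_zero hα0 hα1 hmeas hident htail (t+1))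
  filter_upwards [hone, hEs, hFs] with ω hσ1 hE hF
  have hb := ratio_bounds ω hσ1
  have hub : Filter.IsBoundedUnder (· ≤ ·) Filter.atTop
      (fun n : ℕ => trapMax σ n ω / trapSum σ n ω) :=
    isBoundedUnder_of ⟨1, fun n => (hb n).2⟩
  have hlb : Filter.IsBoundedUnder (· ≥ ·) Filter.atTop
      (fun n : ℕ => trapMax σ n ω / trapSum σ n ω) :=
    isBoundedUnder_of ⟨0, fun n => (hb n).1⟩
  have hliminf_ge : (0:ℝ) ≤ Filter.liminf (fun n : ℕ => trapMax σ n ω / trapSum σ n ω)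
      Filter.atTop :=
    Filter.le_liminf_of_le hub.isCoboundedUnder_ge (Filter.Eventually.of_forall fun n => (hb n).1)
  have hliminf_le : ∀ t : ℕ, Filter.liminf (fun n : ℕ => trapMax σ n ω / trapSum σ n ω)
      Filter.atTop ≤ 2/((t:ℝ)+1) := by
    intro t
    have htpos : 0 < t + 1 := Nat.succ_pos t
    -- frequently the ratio is at most 2/(t+1)
    have hfreqE : ∃ᶠ k in Filter.atTop, ω ∈ evtE σ α (t+1) k :=
      mem_limsup_iff_frequently_mem.1 (hE t)
    have hevF : ∀ᶠ k in Filter.atTop, ω ∉ evtF σ α (t+1) k := by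
      have := hF t
      rw [mem_limsup_iff_frequently_mem] at this
      exact Filter.not_frequently.1 this
    have hfreq2 := hfreqE.and_eventually hevF
    have hfreq : ∃ᶠ n in Filter.atTop,
        trapMax σ n ω / trapSum σ n ω ≤ 2/((t:ℝ)+1) := by
      rw [Filter.frequently_atTop]
      intro m
      obtain ⟨k, hkm, hkE, hkF⟩ := Filter.frequently_atTop.1 hfreq2 m
      refine ⟨bseq α (t+1) (k+1), ?_, ?_⟩
      · have h1 := bseq_ge hα0 hα1 (t+1) htpos (k+1)
        omega
      · have hkF' : trapSum σ (bseq α (t+1) k) ω ≤ bcT α k (bseq α (t+1) k) := by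
          simpa [evtF, not_lt] using hkF
        have := pointwise_ratio hα0 hα1 (t+1) htpos k ω hσ1 hkE hkF'
        simpa using this
    exact Filter.liminf_le_of_frequently_le hfreq hlb
  have htends : Filter.Tendsto (fun t : ℕ => 2/((t:ℝ)+1)) Filter.atTop (nhds 0) := by
    have h1 := tendsto_const_div_atTop_nhds_zero_nat (2:ℝ)
    have h2 := h1.comp (tendsto_add_atTop_nat 1)
    have h3 : ((fun n : ℕ => 2/(n:ℝ)) ∘ (fun t : ℕ => t + 1)) = fun t : ℕ => 2/((t:ℝ)+1) := by
      funext t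
      simp only [Function.comp_apply]
      push_cast
      ring
    rwa [h3] at h2
  have hle0 : Filter.liminf (fun n : ℕ => trapMax σ n ω / trapSum σ n ω) Filter.atTop ≤ 0 :=
    ge_of_tendsto' htends hliminf_le
  linarith
end

section
/- As θ → 0+, the Laplace transform of σ_0 satisfies 1 − E(e^{−θσ_0}) ~ c_α θ^α ℓ_α(θ^{−1}), where c_α := Γ(1−α) if α ∈ (0,1) and c_α := 1 if α = 1; that is, the ratio (1 − E(e^{−θσ_0})) / (c_α θ^α ℓ_α(θ^{−1})) tends to 1 as θ → 0+. -/
open MeasureTheory ProbabilityTheory Filter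

/-- The logarithmic correction `ℓ_α(u)`: equal to `1` for `α ∈ (0,1)` and `log u` for `α = 1`. -/
noncomputable def ell (α u : ℝ) : ℝ := if α = 1 then Real.log u else 1

/-- The constant `c_α`: equal to `Γ(1-α)` for `α ∈ (0,1)` and `1` for `α = 1`. -/
noncomputable def cConst (α : ℝ) : ℝ := if α = 1 then 1 else Real.Gamma (1 - α)

namespace LaplaceAux

open Set Real
open scoped ENNReal NNReal Topology


lemma integral_tail {α : ℝ} (hα : 0 < α) {u : ℝ} (hu : 0 < u) :
    ∫ t in Ioi u, α * t ^ (-α - 1) = u ^ (-α) := by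
  rw [MeasureTheory.integral_const_mul, integral_Ioi_rpow_of_lt (by linarith) hu,
    show -α - 1 + 1 = -α by ring]
  field_simp

lemma integrable_tail {α : ℝ} (hα : 0 < α) {u : ℝ} (hu : 0 < u) :
    IntegrableOn (fun t : ℝ => α * t ^ (-α - 1)) (Ioi u) :=
  (integrableOn_Ioi_rpow_of_lt (by linarith) hu).const_mul α

lemma lint_tail {α : ℝ} (hα : 0 < α) {u : ℝ} (hu : 0 < u) :
    ∫⁻ t in Ioi u, ENNReal.ofReal (α * t ^ (-α - 1)) = ENNReal.ofReal (u ^ (-α)) := by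
  rw [← ofReal_integral_eq_lintegral_ofReal (integrable_tail hα hu)
    (((ae_restrict_mem measurableSet_Ioi).mono fun t ht =>
      mul_nonneg hα.le (rpow_nonneg (hu.trans ht).le _))), integral_tail hα hu]

noncomputable def dens (α : ℝ) : ℝ → ℝ := (Ioi 1).indicator fun t => α * t ^ (-α - 1)

lemma dens_nonneg {α : ℝ} (hα : 0 < α) (t : ℝ) : 0 ≤ dens α t :=
  Set.indicator_nonneg (fun t ht => mul_nonneg hα.le
    (rpow_nonneg (zero_le_one.trans (le_of_lt ht)) _)) t

lemma meas_dens {α : ℝ} : Measurable (dens α) :=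
  ((measurable_id.pow_const (-α - 1)).const_mul α).indicator measurableSet_Ioi

noncomputable def nu (α : ℝ) : Measure ℝ :=
  volume.withDensity fun t => ENNReal.ofReal (dens α t)

lemma nu_apply {α : ℝ} {s : Set ℝ} (hs : MeasurableSet s) :
    nu α s = ∫⁻ t in Ioi 1 ∩ s, ENNReal.ofReal (α * t ^ (-α - 1)) := by
  rw [nu, withDensity_apply _ hs]
  calc ∫⁻ t in s, ENNReal.ofReal (dens α t)
      = ∫⁻ t in s, (Ioi 1).indicator (fun t => ENNReal.ofReal (α * t ^ (-α - 1))) t :=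
        lintegral_congr fun t => by
          by_cases ht : t ∈ Ioi (1:ℝ) <;>
            simp [dens, Set.indicator_of_mem, Set.indicator_of_notMem, ht]
    _ = ∫⁻ t in Ioi 1 ∩ s, ENNReal.ofReal (α * t ^ (-α - 1)) := by
        rw [lintegral_indicator measurableSet_Ioi,
          Measure.restrict_restrict measurableSet_Ioi]

lemma nu_Ici {α : ℝ} (hα : 0 < α) (u : ℝ) :
    nu α (Ici u) = ENNReal.ofReal ((max 1 u) ^ (-α)) := by
  rw [nu_apply measurableSet_Ici]
  have h : (Ioi 1 ∩ Ici u : Set ℝ) =ᵐ[volume] (Ioi (max 1 u) : Set ℝ) := by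
    rcases le_or_gt u 1 with h | h
    · have he : (Ioi 1 ∩ Ici u : Set ℝ) = Ioi (max 1 u) := by
        rw [max_eq_left h]
        exact inter_eq_left.2 fun t ht => le_trans h (le_of_lt ht)
      rw [he]
      exact Filter.EventuallyEq.rfl
    · have he : (Ioi 1 ∩ Ici u : Set ℝ) = Ici (max 1 u) := by
        rw [max_eq_right h.le]
        exact inter_eq_right.2 fun t ht => lt_of_lt_of_le h ht
      rw [he]
      exact (Ioi_ae_eq_Ici).symm
  rw [setLIntegral_congr h, lint_tail hα (lt_of_lt_of_le zero_lt_one (le_max_left _ _))]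

lemma nu_univ {α : ℝ} (hα : 0 < α) : nu α Set.univ = 1 := by
  rw [nu_apply MeasurableSet.univ, inter_univ, lint_tail hα zero_lt_one, one_rpow,
    ENNReal.ofReal_one]

lemma integral_nu {α θ : ℝ} (hα : 0 < α) :
    ∫ x, exp (-θ * x) ∂(nu α) = ∫ t in Ioi 1, α * t ^ (-α - 1) * exp (-θ * t) := by
  rw [nu]
  have h2 : (fun t : ℝ => ENNReal.ofReal (dens α t))
      = fun t => ((dens α t).toNNReal : ℝ≥0∞) := rfl
  have h4 := integral_withDensity_eq_integral_smul (μ := volume)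
    (f := fun t => (dens α t).toNNReal)
    (measurable_real_toNNReal.comp meas_dens) (fun x => exp (-θ * x))
  rw [h2, h4]
  have h3 : (fun x => (dens α x).toNNReal • exp (-θ * x))
      = fun x => (Ioi 1).indicator (fun t => α * t ^ (-α - 1) * exp (-θ * t)) x := by
    funext x
    rw [NNReal.smul_def, smul_eq_mul, Real.coe_toNNReal _ (dens_nonneg hα x), dens]
    by_cases hx : x ∈ Ioi (1:ℝ) <;>
      simp [Set.indicator_of_mem, Set.indicator_of_notMem, hx]
  rw [h3, integral_indicator measurableSet_Ioi]


variable {Ω : Type*} [MeasurableSpace Ω]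

lemma map_eq (P : Measure Ω) [IsProbabilityMeasure P] {α : ℝ} (hα : 0 < α)
    {σ₀ : Ω → ℝ} (hmeas : Measurable σ₀)
    (htail : ∀ u : ℝ, 1 ≤ u → P {ω | u ≤ σ₀ ω} = ENNReal.ofReal (u ^ (-α))) :
    P.map σ₀ = nu α := by
  haveI := Measure.isProbabilityMeasure_map (μ := P) hmeas.aemeasurable
  refine Measure.ext_of_Ici _ _ fun u => ?_
  rw [Measure.map_apply hmeas measurableSet_Ici, nu_Ici hα]
  have hpre : σ₀ ⁻¹' Ici u = {ω | u ≤ σ₀ ω} := rfl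
  rcases le_or_gt 1 u with h | h
  · rw [hpre, max_eq_right h]; exact htail u h
  · rw [max_eq_left h.le, one_rpow, ENNReal.ofReal_one]
    have h1 : P {ω | (1:ℝ) ≤ σ₀ ω} = 1 := by
      rw [htail 1 le_rfl, one_rpow, ENNReal.ofReal_one]
    refine le_antisymm prob_le_one ?_
    rw [hpre, ← h1]
    exact measure_mono fun ω hω => le_trans h.le hω

variable {α θ : ℝ}

lemma int_exp_rpow (hθ : 0 < θ) (hα : 0 < α) :
    IntegrableOn (fun t : ℝ => exp (-θ * t) * t ^ (-α)) (Ioi 1) := by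
  refine Integrable.mono (exp_neg_integrableOn_Ioi 1 hθ)
    (((measurable_id.const_mul (-θ)).exp.mul
      (measurable_id.pow_const (-α))).aestronglyMeasurable) ?_
  filter_upwards [ae_restrict_mem measurableSet_Ioi] with t ht
  have h0 : (0:ℝ) < t := lt_trans zero_lt_one ht
  rw [Real.norm_eq_abs, Real.norm_eq_abs, abs_of_nonneg (exp_pos _).le,
    abs_of_nonneg (mul_nonneg (exp_pos _).le (rpow_nonneg h0.le _))]
  calc exp (-θ*t) * t ^ (-α) ≤ exp (-θ*t) * 1 := by
        refine mul_le_mul_of_nonneg_left ?_ (exp_pos _).le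
        exact rpow_le_one_of_one_le_of_nonpos ht.le (neg_nonpos.2 hα.le)
    _ = exp (-θ*t) := mul_one _

lemma abs_exp_sub_one_le (hθ : 0 ≤ θ) {t : ℝ} (ht : 0 ≤ t) : |exp (-θ * t) - 1| ≤ 1 := by
  have h1 : exp (-θ * t) ≤ 1 := exp_le_one_iff.2 (by nlinarith)
  have h2 : 0 < exp (-θ * t) := exp_pos _
  rw [abs_le]; constructor <;> nlinarith

lemma int_sub_one (hθ : 0 ≤ θ) (hα : 0 < α) :
    IntegrableOn (fun t : ℝ => (exp (-θ * t) - 1) * t ^ (-α - 1)) (Ioi 1) := by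
  refine Integrable.mono (integrableOn_Ioi_rpow_of_lt (a := -α-1) (by linarith) zero_lt_one)
    ((((measurable_id.const_mul (-θ)).exp.sub_const 1).mul
      (measurable_id.pow_const (-α - 1))).aestronglyMeasurable) ?_
  filter_upwards [ae_restrict_mem measurableSet_Ioi] with t ht
  have h0 : (0:ℝ) < t := lt_trans zero_lt_one ht
  rw [Real.norm_eq_abs, Real.norm_eq_abs, abs_mul]
  calc |exp (-θ*t) - 1| * |t ^ (-α-1)| ≤ 1 * |t ^ (-α-1)| :=
        mul_le_mul_of_nonneg_right (abs_exp_sub_one_le hθ h0.le) (abs_nonneg _)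
    _ = |t ^ (-α-1)| := one_mul _

lemma int_main (hθ : 0 ≤ θ) (hα : 0 < α) :
    IntegrableOn (fun t : ℝ => α * t ^ (-α - 1) * exp (-θ * t)) (Ioi 1) := by
  refine Integrable.mono (integrable_tail hα zero_lt_one)
    (((measurable_id.pow_const (-α - 1)).const_mul α |>.mul
      ((measurable_id.const_mul (-θ)).exp)).aestronglyMeasurable) ?_
  filter_upwards [ae_restrict_mem measurableSet_Ioi] with t ht
  have h0 : (0:ℝ) < t := lt_trans zero_lt_one ht
  have hnn : 0 ≤ α * t ^ (-α - 1) := mul_nonneg hα.le (rpow_nonneg h0.le _)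
  rw [Real.norm_eq_abs, Real.norm_eq_abs, abs_mul, abs_of_nonneg (exp_pos _).le,
    abs_of_nonneg hnn]
  have h1 : exp (-θ * t) ≤ 1 := exp_le_one_iff.2 (by nlinarith)
  nlinarith [hnn, exp_pos (-θ * t)]

lemma hasDeriv_phi (hθ : 0 < θ) (hα : 0 < α) {x : ℝ} (hx : 0 < x) :
    HasDerivAt (fun t : ℝ => (exp (-θ * t) - 1) * t ^ (-α))
      (-θ * (exp (-θ * x) * x ^ (-α)) + -α * ((exp (-θ * x) - 1) * x ^ (-α - 1))) x := by
  have h1 : HasDerivAt (fun t : ℝ => exp (-θ * t) - 1) (exp (-θ * x) * (-θ * 1)) x :=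
    (((hasDerivAt_id x).const_mul (-θ)).exp).sub_const 1
  have h2 : HasDerivAt (fun t : ℝ => t ^ (-α)) (-α * x ^ (-α - 1)) x :=
    hasDerivAt_rpow_const (Or.inl hx.ne')
  have key := h1.mul h2
  have hDD : -θ * (exp (-θ * x) * x ^ (-α)) + -α * ((exp (-θ * x) - 1) * x ^ (-α - 1))
      = exp (-θ * x) * (-θ * 1) * x ^ (-α) + (exp (-θ * x) - 1) * (-α * x ^ (-α - 1)) := by
    ring
  rw [hDD]
  exact key

lemma ibp (hα : 0 < α) (hθ : 0 < θ) :
    ∫ t in Ioi 1, (-θ * (exp (-θ * t) * t ^ (-α)) + -α * ((exp (-θ * t) - 1) * t ^ (-α - 1)))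
      = 1 - exp (-θ) := by
  have hcont : ContinuousWithinAt (fun t : ℝ => (exp (-θ * t) - 1) * t ^ (-α)) (Ici 1) 1 :=
    (hasDeriv_phi hθ hα zero_lt_one).continuousAt.continuousWithinAt
  have hder : ∀ x ∈ Ioi (1:ℝ), HasDerivAt (fun t : ℝ => (exp (-θ * t) - 1) * t ^ (-α))
      (-θ * (exp (-θ * x) * x ^ (-α)) + -α * ((exp (-θ * x) - 1) * x ^ (-α - 1))) x :=
    fun x hx => hasDeriv_phi hθ hα (lt_trans zero_lt_one hx)
  have f'int : IntegrableOn (fun x : ℝ =>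
      -θ * (exp (-θ * x) * x ^ (-α)) + -α * ((exp (-θ * x) - 1) * x ^ (-α - 1))) (Ioi 1) :=
    ((int_exp_rpow hθ hα).const_mul (-θ)).add ((int_sub_one hθ.le hα).const_mul (-α))
  have hlim : Tendsto (fun t : ℝ => (exp (-θ * t) - 1) * t ^ (-α)) atTop (𝓝 0) := by
    refine squeeze_zero_norm' ?_ (tendsto_rpow_neg_atTop hα)
    filter_upwards [eventually_ge_atTop (1:ℝ)] with t ht
    have h0 : (0:ℝ) < t := lt_of_lt_of_le zero_lt_one ht
    rw [Real.norm_eq_abs, abs_mul, abs_of_nonneg (rpow_nonneg h0.le _)]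
    calc |exp (-θ*t) - 1| * t ^ (-α) ≤ 1 * t ^ (-α) :=
          mul_le_mul_of_nonneg_right (abs_exp_sub_one_le hθ.le h0.le) (rpow_nonneg h0.le _)
      _ = t ^ (-α) := one_mul _
  have := integral_Ioi_of_hasDerivAt_of_tendsto hcont hder f'int hlim
  rw [this, one_rpow]
  ring

lemma subst (hα : 0 < α) (hθ : 0 < θ) :
    θ * ∫ t in Ioi 1, exp (-θ * t) * t ^ (-α)
      = θ ^ α * ∫ u in Ioi θ, exp (-u) * u ^ (-α) := by
  have h := integral_comp_mul_left_Ioi (fun u => exp (-u) * u ^ (-α)) 1 hθ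
  rw [mul_one, smul_eq_mul] at h
  have h2 : ∫ x in Ioi 1, exp (-(θ * x)) * (θ * x) ^ (-α)
      = θ ^ (-α) * ∫ t in Ioi 1, exp (-θ * t) * t ^ (-α) := by
    rw [← MeasureTheory.integral_const_mul]
    refine setIntegral_congr_fun measurableSet_Ioi fun x hx => ?_
    rw [mul_rpow hθ.le (le_of_lt (lt_trans zero_lt_one hx)), neg_mul]
    ring
  have hpos : (0:ℝ) < θ ^ α := rpow_pos_of_pos hθ α
  have hrec : θ ^ (-α) = (θ ^ α)⁻¹ := rpow_neg hθ.le α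
  rw [h2, hrec] at h
  set B := ∫ t in Ioi 1, exp (-θ * t) * t ^ (-α) with hB
  set K := ∫ u in Ioi θ, exp (-u) * u ^ (-α) with hK
  field_simp [hpos.ne', hθ.ne'] at h
  linear_combination h

lemma master (hα : 0 < α) (hθ : 0 < θ) :
    1 - ∫ t in Ioi 1, α * t ^ (-α - 1) * exp (-θ * t)
      = (1 - exp (-θ)) + θ ^ α * ∫ u in Ioi θ, exp (-u) * u ^ (-α) := by
  have h1 := ibp hα hθ
  rw [integral_add ((int_exp_rpow hθ hα).const_mul (-θ))
    ((int_sub_one hθ.le hα).const_mul (-α)),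
    MeasureTheory.integral_const_mul, MeasureTheory.integral_const_mul] at h1
  have h2 : α * ∫ t in Ioi 1, (exp (-θ * t) - 1) * t ^ (-α - 1)
      = (∫ t in Ioi 1, α * t ^ (-α - 1) * exp (-θ * t)) - 1 := by
    rw [← MeasureTheory.integral_const_mul]
    have h3 : ∫ t in Ioi 1, α * ((exp (-θ * t) - 1) * t ^ (-α - 1))
        = ∫ t in Ioi 1, (α * t ^ (-α - 1) * exp (-θ * t) - α * t ^ (-α - 1)) := by
      refine setIntegral_congr_fun measurableSet_Ioi fun t _ => ?_
      ring
    rw [h3, integral_sub (int_main hθ.le hα) (integrable_tail hα zero_lt_one),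
      integral_tail hα zero_lt_one, one_rpow]
  have h4 := subst hα hθ
  linear_combination h1 + h2 + h4



lemma gamma_repr {α : ℝ} (hα1 : α < 1) :
    Real.Gamma (1 - α) = ∫ u in Ioi (0:ℝ), exp (-u) * u ^ (-α) := by
  rw [Real.Gamma_eq_integral (by linarith)]
  simp only [show (1:ℝ) - α - 1 = -α by ring]

lemma gamma_integrable {α : ℝ} (hα1 : α < 1) :
    IntegrableOn (fun u : ℝ => exp (-u) * u ^ (-α)) (Ioi 0) := by
  have := Real.GammaIntegral_convergent (s := 1 - α) (by linarith)
  simpa [show (1:ℝ) - α - 1 = -α by ring] using this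

lemma tendsto_K {α : ℝ} (hα : 0 < α) (hα1 : α < 1) :
    Tendsto (fun θ : ℝ => ∫ u in Ioi θ, exp (-u) * u ^ (-α)) (𝓝[>] 0)
      (𝓝 (Real.Gamma (1 - α))) := by
  have hint := gamma_integrable hα1
  have hsplit : ∀ θ : ℝ, 0 < θ → (∫ u in Ioi (0:ℝ), exp (-u) * u ^ (-α))
      = (∫ u in Ioc 0 θ, exp (-u) * u ^ (-α)) + ∫ u in Ioi θ, exp (-u) * u ^ (-α) := by
    intro θ hθ
    rw [← Ioc_union_Ioi_eq_Ioi hθ.le, setIntegral_union Ioc_disjoint_Ioi_same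
      measurableSet_Ioi (hint.mono_set Ioc_subset_Ioi_self)
      (hint.mono_set (Ioi_subset_Ioi hθ.le))]
  have hIoc : Tendsto (fun θ : ℝ => ∫ u in Ioc 0 θ, exp (-u) * u ^ (-α)) (𝓝[>] 0) (𝓝 0) := by
    have h0 : Tendsto (fun θ : ℝ => θ ^ (1 - α) / (1 - α)) (𝓝[>] 0) (𝓝 0) := by
      have hc : Tendsto (fun θ : ℝ => θ ^ (1 - α)) (𝓝 0) (𝓝 ((0:ℝ) ^ (1 - α))) :=
        (Real.continuousAt_rpow_const 0 (1 - α) (Or.inr (by linarith))).tendsto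
      rw [Real.zero_rpow (by linarith : (1:ℝ) - α ≠ 0)] at hc
      simpa using (hc.mono_left nhdsWithin_le_nhds).div_const (1 - α)
    refine squeeze_zero' ?_ ?_ h0
    · filter_upwards [self_mem_nhdsWithin] with θ hθ
      exact setIntegral_nonneg measurableSet_Ioc fun u hu =>
        mul_nonneg (exp_pos _).le (rpow_nonneg hu.1.le _)
    · filter_upwards [self_mem_nhdsWithin] with θ hθ
      replace hθ : (0:ℝ) < θ := hθ
      have hiL : IntegrableOn (fun u : ℝ => u ^ (-α)) (Ioc 0 θ) := by
        rw [← intervalIntegrable_iff_integrableOn_Ioc_of_le hθ.le]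
        exact intervalIntegral.intervalIntegrable_rpow' (by linarith)
      have h1 : ∫ u in Ioc 0 θ, exp (-u) * u ^ (-α) ≤ ∫ u in Ioc 0 θ, u ^ (-α) := by
        refine setIntegral_mono_on (hf := hint.mono_set Ioc_subset_Ioi_self) (hg := hiL)
          measurableSet_Ioc fun u hu => ?_
        calc exp (-u) * u ^ (-α) ≤ 1 * u ^ (-α) :=
              mul_le_mul_of_nonneg_right (exp_le_one_iff.2 (by linarith [hu.1]))
                (rpow_nonneg hu.1.le _)
          _ = u ^ (-α) := one_mul _
      have h2 : ∫ u in Ioc 0 θ, u ^ (-α) = θ ^ (1 - α) / (1 - α) := by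
        rw [← intervalIntegral.integral_of_le hθ.le,
          integral_rpow (Or.inl (by linarith : (-1:ℝ) < -α)),
          Real.zero_rpow (by linarith : -α + 1 ≠ 0),
          show -α + 1 = 1 - α by ring]
        ring
      linarith
  have hc := (tendsto_const_nhds (x := Real.Gamma (1 - α))
    (f := 𝓝[>] (0:ℝ))).sub hIoc
  rw [sub_zero] at hc
  refine hc.congr' ?_
  filter_upwards [self_mem_nhdsWithin] with θ hθ
  replace hθ : (0:ℝ) < θ := hθ
  rw [gamma_repr hα1, hsplit θ hθ]
  ring

lemma tendsto_lt {α : ℝ} (hα : 0 < α) (hα1 : α < 1) :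
    Tendsto (fun θ : ℝ =>
      ((1 - exp (-θ)) + θ ^ α * ∫ u in Ioi θ, exp (-u) * u ^ (-α))
        / (cConst α * θ ^ α * ell α θ⁻¹)) (𝓝[>] 0) (𝓝 1) := by
  have hne : α ≠ 1 := ne_of_lt hα1
  have hΓ : 0 < Real.Gamma (1 - α) := Real.Gamma_pos_of_pos (by linarith)
  have term2 : Tendsto (fun θ : ℝ =>
      (∫ u in Ioi θ, exp (-u) * u ^ (-α)) / Real.Gamma (1 - α)) (𝓝[>] 0) (𝓝 1) := by
    have := (tendsto_K hα hα1).div_const (Real.Gamma (1 - α))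
    rwa [div_self hΓ.ne'] at this
  have term1 : Tendsto (fun θ : ℝ =>
      (1 - exp (-θ)) / (Real.Gamma (1 - α) * θ ^ α)) (𝓝[>] 0) (𝓝 0) := by
    have h0 : Tendsto (fun θ : ℝ => θ ^ (1 - α) / Real.Gamma (1 - α)) (𝓝[>] 0) (𝓝 0) := by
      have hc : Tendsto (fun θ : ℝ => θ ^ (1 - α)) (𝓝 0) (𝓝 ((0:ℝ) ^ (1 - α))) :=
        (Real.continuousAt_rpow_const 0 (1 - α) (Or.inr (by linarith))).tendsto
      rw [Real.zero_rpow (by linarith : (1:ℝ) - α ≠ 0)] at hc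
      simpa using (hc.mono_left nhdsWithin_le_nhds).div_const (Real.Gamma (1 - α))
    refine squeeze_zero' ?_ ?_ h0
    · filter_upwards [self_mem_nhdsWithin] with θ hθ
      replace hθ : (0:ℝ) < θ := hθ
      have h1 : exp (-θ) ≤ 1 := exp_le_one_iff.2 (by linarith)
      exact div_nonneg (by linarith) (mul_nonneg hΓ.le (rpow_pos_of_pos hθ α).le)
    · filter_upwards [self_mem_nhdsWithin] with θ hθ
      replace hθ : (0:ℝ) < θ := hθ
      have hθα : (0:ℝ) < θ ^ α := rpow_pos_of_pos hθ α
      have hprod : θ ^ (1 - α) * θ ^ α = θ := by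
        rw [← rpow_add hθ]; norm_num
      rw [div_le_div_iff₀ (by positivity) hΓ]
      have hexp : 1 - exp (-θ) ≤ θ := by linarith [add_one_le_exp (-θ)]
      nlinarith [hθα, hΓ, (rpow_pos_of_pos hθ (1 - α))]
  have := term1.add term2
  rw [zero_add] at this
  refine this.congr' ?_
  filter_upwards [self_mem_nhdsWithin] with θ hθ
  replace hθ : (0:ℝ) < θ := hθ
  have hθα : (0:ℝ) < θ ^ α := rpow_pos_of_pos hθ α
  rw [cConst, ell, if_neg hne, if_neg hne]
  field_simp



lemma int_inv_exp {θ : ℝ} (hθ : 0 < θ) :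
    IntegrableOn (fun u : ℝ => exp (-u) * u ^ (-(1:ℝ))) (Ioi θ) := by
  refine Integrable.mono ((exp_neg_integrableOn_Ioi θ zero_lt_one).const_mul θ⁻¹)
    ((measurable_id.neg.exp.mul (measurable_id.pow_const (-(1:ℝ)))).aestronglyMeasurable) ?_
  filter_upwards [ae_restrict_mem measurableSet_Ioi] with u hu
  have h0 : (0:ℝ) < u := lt_trans hθ hu
  rw [Real.rpow_neg_one, Real.norm_eq_abs, Real.norm_eq_abs,
    abs_of_nonneg (mul_nonneg (exp_pos _).le (inv_nonneg.2 h0.le)),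
    abs_of_nonneg (mul_nonneg (inv_nonneg.2 hθ.le) (exp_pos _).le), neg_one_mul]
  have hinv : u⁻¹ ≤ θ⁻¹ := one_div u ▸ one_div θ ▸ one_div_le_one_div_of_le hθ hu.le
  calc exp (-u) * u⁻¹ ≤ exp (-u) * θ⁻¹ :=
        mul_le_mul_of_nonneg_left hinv (exp_pos _).le
    _ = θ⁻¹ * exp (-u) := mul_comm _ _

lemma K1_bound {θ : ℝ} (hθ0 : 0 < θ) (hθ1 : θ ≤ 1) :
    |(∫ u in Ioi θ, exp (-u) * u ^ (-(1:ℝ))) - Real.log θ⁻¹| ≤ 2 := by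
  have hint := int_inv_exp hθ0
  have hintIoi1 : IntegrableOn (fun u : ℝ => exp (-u) * u ^ (-(1:ℝ))) (Ioi 1) :=
    hint.mono_set (Ioi_subset_Ioi hθ1)
  have hintIoc : IntegrableOn (fun u : ℝ => exp (-u) * u ^ (-(1:ℝ))) (Ioc θ 1) :=
    hint.mono_set Ioc_subset_Ioi_self
  have hsplit : (∫ u in Ioi θ, exp (-u) * u ^ (-(1:ℝ)))
      = (∫ u in Ioc θ 1, exp (-u) * u ^ (-(1:ℝ)))
        + ∫ u in Ioi (1:ℝ), exp (-u) * u ^ (-(1:ℝ)) := by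
    rw [← Ioc_union_Ioi_eq_Ioi hθ1, setIntegral_union Ioc_disjoint_Ioi_same
      measurableSet_Ioi hintIoc hintIoi1]
  have hizero : (0:ℝ) ∉ uIcc θ 1 := by
    rw [Set.uIcc_of_le hθ1]
    rintro ⟨h1, -⟩
    exact absurd h1 (not_le.mpr hθ0)
  have hintL : IntegrableOn (fun u : ℝ => u ^ (-(1:ℝ))) (Ioc θ 1) := by
    rw [← intervalIntegrable_iff_integrableOn_Ioc_of_le hθ1]
    exact intervalIntegral.intervalIntegrable_rpow (Or.inr hizero)
  have hL : (∫ u in Ioc θ 1, u ^ (-(1:ℝ))) = Real.log θ⁻¹ := by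
    simp_rw [Real.rpow_neg_one]
    rw [← intervalIntegral.integral_of_le hθ1, integral_inv hizero, one_div]
  -- 0 ≤ L - A ≤ 1
  have hdiff : (∫ u in Ioc θ 1, u ^ (-(1:ℝ)))
      - (∫ u in Ioc θ 1, exp (-u) * u ^ (-(1:ℝ))) ∈ Icc (0:ℝ) 1 := by
    rw [← integral_sub hintL hintIoc]
    constructor
    · refine setIntegral_nonneg measurableSet_Ioc fun u hu => ?_
      have h0 : (0:ℝ) < u := lt_trans hθ0 hu.1
      have he : exp (-u) ≤ 1 := exp_le_one_iff.2 (by linarith)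
      have : u ^ (-(1:ℝ)) ≥ 0 := rpow_nonneg h0.le _
      nlinarith
    · have hone : ∫ u in Ioc θ 1, (1:ℝ) = 1 - θ := by
        rw [setIntegral_const, Real.volume_real_Ioc_of_le hθ1, smul_eq_mul, mul_one]
      have hle : (∫ u in Ioc θ 1, (u ^ (-(1:ℝ)) - exp (-u) * u ^ (-(1:ℝ))))
          ≤ ∫ u in Ioc θ 1, (1:ℝ) := by
        refine setIntegral_mono_on (hf := hintL.sub hintIoc)
          (hg := integrableOn_const measure_Ioc_lt_top.ne)
          measurableSet_Ioc fun u hu => ?_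
        have h0 : (0:ℝ) < u := lt_trans hθ0 hu.1
        rw [Real.rpow_neg_one]
        have key : (1 - exp (-u)) * u⁻¹ ≤ u * u⁻¹ := by
          refine mul_le_mul_of_nonneg_right ?_ (inv_nonneg.2 h0.le)
          linarith [add_one_le_exp (-u)]
        rw [mul_inv_cancel₀ h0.ne'] at key
        calc u⁻¹ - exp (-u) * u⁻¹ = (1 - exp (-u)) * u⁻¹ := by ring
          _ ≤ 1 := key
      linarith [hone ▸ hle]
  -- 0 ≤ B ≤ 1
  have hB : (∫ u in Ioi (1:ℝ), exp (-u) * u ^ (-(1:ℝ))) ∈ Icc (0:ℝ) 1 := by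
    constructor
    · refine setIntegral_nonneg measurableSet_Ioi fun u hu => ?_
      exact mul_nonneg (exp_pos _).le (rpow_nonneg (zero_le_one.trans hu.le) _)
    · have hle : (∫ u in Ioi (1:ℝ), exp (-u) * u ^ (-(1:ℝ)))
          ≤ ∫ u in Ioi (1:ℝ), exp (-u) := by
        have hge : IntegrableOn (fun u : ℝ => exp (-u)) (Ioi 1) :=
          (exp_neg_integrableOn_Ioi 1 zero_lt_one).congr_fun
            (fun x _ => by dsimp only; rw [neg_one_mul]) measurableSet_Ioi
        refine setIntegral_mono_on (hf := hintIoi1) (hg := hge)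
          measurableSet_Ioi fun u hu => ?_
        have h0 : (0:ℝ) < u := lt_trans zero_lt_one hu
        calc exp (-u) * u ^ (-(1:ℝ)) ≤ exp (-u) * 1 := by
              refine mul_le_mul_of_nonneg_left ?_ (exp_pos _).le
              exact rpow_le_one_of_one_le_of_nonpos hu.le (by norm_num)
          _ = exp (-u) := mul_one _
      rw [integral_exp_neg_Ioi] at hle
      have : exp (-1:ℝ) ≤ 1 := exp_le_one_iff.2 (by norm_num)
      linarith
  rw [hsplit, abs_le]
  obtain ⟨hd1, hd2⟩ := hdiff
  obtain ⟨hb1, hb2⟩ := hB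
  constructor <;> [linarith [hL ▸ hd2, hL ▸ hd1]; linarith [hL ▸ hd1, hL ▸ hd2]]

lemma tendsto_eq1 :
    Tendsto (fun θ : ℝ =>
      ((1 - exp (-θ)) + θ ^ (1:ℝ) * ∫ u in Ioi θ, exp (-u) * u ^ (-(1:ℝ)))
        / (cConst 1 * θ ^ (1:ℝ) * ell 1 θ⁻¹)) (𝓝[>] 0) (𝓝 1) := by
  have hlog : Tendsto (fun θ : ℝ => Real.log θ⁻¹) (𝓝[>] 0) atTop :=
    Real.tendsto_log_atTop.comp tendsto_inv_nhdsGT_zero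
  have hmem : Ioo (0:ℝ) 1 ∈ 𝓝[>] (0:ℝ) :=
    Ioo_mem_nhdsGT_of_mem ⟨le_refl 0, zero_lt_one⟩
  have term2 : Tendsto (fun θ : ℝ =>
      (∫ u in Ioi θ, exp (-u) * u ^ (-(1:ℝ))) / Real.log θ⁻¹) (𝓝[>] 0) (𝓝 1) := by
    have h0 : Tendsto (fun θ : ℝ =>
        (∫ u in Ioi θ, exp (-u) * u ^ (-(1:ℝ))) / Real.log θ⁻¹ - 1) (𝓝[>] 0) (𝓝 0) := by
      refine squeeze_zero_norm' ?_ (tendsto_const_nhds.div_atTop hlog (a := 2))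
      filter_upwards [hmem] with θ hθ
      have hθ0 : (0:ℝ) < θ := hθ.1
      have hL : 0 < Real.log θ⁻¹ := Real.log_pos ((one_lt_inv₀ hθ0).2 hθ.2)
      have hb := K1_bound hθ0 hθ.2.le
      set L := Real.log θ⁻¹ with hLdef
      set K := ∫ u in Ioi θ, exp (-u) * u ^ (-(1:ℝ)) with hK
      rw [div_sub_one hL.ne', Real.norm_eq_abs, abs_div, abs_of_pos hL]
      gcongr
    have := h0.add (tendsto_const_nhds (x := (1:ℝ)))
    rw [zero_add] at this
    refine this.congr fun θ => by ring
  have term1 : Tendsto (fun θ : ℝ =>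
      (1 - exp (-θ)) / (θ * Real.log θ⁻¹)) (𝓝[>] 0) (𝓝 0) := by
    refine squeeze_zero' ?_ ?_ hlog.inv_tendsto_atTop
    · filter_upwards [hmem] with θ hθ
      have hθ0 : (0:ℝ) < θ := hθ.1
      have hL : 0 < Real.log θ⁻¹ := Real.log_pos ((one_lt_inv₀ hθ0).2 hθ.2)
      have he : exp (-θ) ≤ 1 := exp_le_one_iff.2 (by linarith)
      exact div_nonneg (by linarith) (by positivity)
    · filter_upwards [hmem] with θ hθ
      have hθ0 : (0:ℝ) < θ := hθ.1
      have hL : 0 < Real.log θ⁻¹ := Real.log_pos ((one_lt_inv₀ hθ0).2 hθ.2)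
      have he : 1 - exp (-θ) ≤ θ := by linarith [add_one_le_exp (-θ)]
      set L := Real.log θ⁻¹ with hLdef
      have h2 : (1 - exp (-θ)) / (θ * L) ≤ θ / (θ * L) := by
        gcongr
      have h3 : θ / (θ * L) = L⁻¹ := by
        field_simp
      calc (1 - exp (-θ)) / (θ * L) ≤ θ / (θ * L) := h2
        _ = L⁻¹ := h3
  have hsum := term1.add term2
  rw [zero_add] at hsum
  refine hsum.congr' ?_
  filter_upwards [hmem] with θ hθ
  have hθ0 : (0:ℝ) < θ := hθ.1
  have hL : 0 < Real.log θ⁻¹ := Real.log_pos ((one_lt_inv₀ hθ0).2 hθ.2)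
  rw [cConst, ell, if_pos rfl, if_pos rfl, Real.rpow_one]
  set L := Real.log θ⁻¹ with hLdef
  set K := ∫ u in Ioi θ, exp (-u) * u ^ (-(1:ℝ)) with hK
  field_simp


end LaplaceAux

/-- As `θ → 0+`, `1 - E(e^{-θ σ_0}) ∼ c_α θ^α ℓ_α(θ⁻¹)`, i.e. the ratio
`(1 - E(e^{-θ σ_0})) / (c_α θ^α ℓ_α(θ⁻¹))` tends to `1`. -/
theorem laplace_transform_asymptotics
    {Ω : Type*} [MeasurableSpace Ω] (P : Measure Ω) [IsProbabilityMeasure P]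
    (α : ℝ) (hα : α ∈ Set.Ioc (0 : ℝ) 1)
    (σ₀ : Ω → ℝ) (hmeas : Measurable σ₀)
    (htail : ∀ u : ℝ, 1 ≤ u → P {ω | u ≤ σ₀ ω} = ENNReal.ofReal (u ^ (-α))) :
    Filter.Tendsto
      (fun θ : ℝ =>
        (1 - ∫ ω, Real.exp (-θ * σ₀ ω) ∂P) / (cConst α * θ ^ α * ell α θ⁻¹))
      (nhdsWithin 0 (Set.Ioi 0)) (nhds 1) := by
  open Set Real LaplaceAux in
  obtain ⟨hα0, hα1⟩ := hα
  have hmap : P.map σ₀ = LaplaceAux.nu α := LaplaceAux.map_eq P hα0 hmeas htail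
  have key : ∀ θ : ℝ, θ ∈ Set.Ioi (0:ℝ) → (1 - ∫ ω, Real.exp (-θ * σ₀ ω) ∂P)
      = (1 - Real.exp (-θ)) + θ ^ α * ∫ u in Set.Ioi θ, Real.exp (-u) * u ^ (-α) := by
    intro θ hθ
    have hE : ∫ ω, Real.exp (-θ * σ₀ ω) ∂P
        = ∫ t in Set.Ioi (1:ℝ), α * t ^ (-α - 1) * Real.exp (-θ * t) := by
      have hcont : Continuous fun x : ℝ => Real.exp (-θ * x) :=
        Real.continuous_exp.comp (continuous_const.mul continuous_id)
      rw [show ∫ ω, Real.exp (-θ * σ₀ ω) ∂P = ∫ x, Real.exp (-θ * x) ∂(P.map σ₀) from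
        (integral_map hmeas.aemeasurable hcont.aestronglyMeasurable).symm,
        hmap, LaplaceAux.integral_nu hα0]
    rw [hE]
    exact LaplaceAux.master hα0 hθ
  have hlim : Filter.Tendsto (fun θ : ℝ =>
      ((1 - Real.exp (-θ)) + θ ^ α * ∫ u in Set.Ioi θ, Real.exp (-u) * u ^ (-α))
        / (cConst α * θ ^ α * ell α θ⁻¹)) (nhdsWithin 0 (Set.Ioi 0)) (nhds 1) := by
    rcases eq_or_lt_of_le hα1 with heq | hlt
    · subst heq
      exact LaplaceAux.tendsto_eq1
    · exact LaplaceAux.tendsto_lt hα0 hlt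
  refine hlim.congr' ?_
  filter_upwards [self_mem_nhdsWithin] with θ hθ
  rw [key θ hθ]
end
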